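/- Let 0<q<1 and ν real, and let g(z) = z·(-q^{2ν+2}z²;q²)_∞/(-z²;q²)_∞. Then g satisfies z²(q·g(z) - q^{2ν+2} g(qz)) = -q·g(z) + g(qz) for all complex z where defined. -/

import Mathlib

open Filter Topology


/-- The infinite q-Pochhammer symbol `(x;q)_∞ = ∏_{n≥0} (1 - x q^n)`. -/
noncomputable def qp (q x : ℂ) : ℂ := ∏' n : ℕ, (1 - x * q ^ n)

/-- `g(z) = z · (-q^{2ν+2}z²;q²)_∞ / (-z²;q²)_∞`. -/
noncomputable def gg (q ν : ℝ) (z : ℂ) : ℂ :=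
  z * qp ((q : ℂ) ^ 2) (-(((q ^ (2 * ν + 2) : ℝ) : ℂ) * z ^ 2)) /
    qp ((q : ℂ) ^ 2) (-(z ^ 2))

lemma multipliable_qp (Q x : ℂ) (hQ : ‖Q‖ < 1) :
    Multipliable (fun n : ℕ => 1 - x * Q ^ n) := by
  have h0 : Tendsto (fun n : ℕ => ‖x‖ * ‖Q‖ ^ n) atTop (nhds 0) := by
    have := (tendsto_pow_atTop_nhds_zero_of_lt_one (norm_nonneg Q) hQ).const_mul ‖x‖
    simpa using this
  obtain ⟨N, hN⟩ := (Metric.tendsto_atTop.mp h0 (1/2) (by norm_num))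
  have key : ∀ n ≥ N, ‖x * Q ^ n‖ ≤ 1/2 := by
    intro n hn
    have := hN n hn
    rw [Real.dist_eq, sub_zero] at this
    have hx : ‖x * Q ^ n‖ = ‖x‖ * ‖Q‖ ^ n := by rw [norm_mul, norm_pow]
    rw [hx]
    have h1 : 0 ≤ ‖x‖ * ‖Q‖ ^ n := by positivity
    calc ‖x‖ * ‖Q‖ ^ n = |‖x‖ * ‖Q‖ ^ n| := (abs_of_nonneg h1).symm
      _ ≤ 1/2 := le_of_lt this
  apply Multipliable.comp_nat_add (k := N)
  have hfn : ∀ (_ : Unit) (n : ℕ), (1 - x * Q ^ (n + N)) ≠ 0 := by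
    intro _ n
    intro h
    have h1 : x * Q ^ (n + N) = 1 := by linear_combination -h
    have := key (n + N) (Nat.le_add_left N n)
    rw [h1] at this
    norm_num at this
  have hlog : Summable fun n : ℕ => Complex.log (1 - x * Q ^ (n + N)) := by
    refine Summable.of_norm_bounded (g := fun n => (3/2) * (‖x‖ * ‖Q‖ ^ (n + N))) ?_ ?_
    · apply Summable.mul_left
      apply Summable.mul_left
      have : Summable fun n : ℕ => ‖Q‖ ^ n := summable_geometric_of_lt_one (norm_nonneg Q) hQ
      simpa [pow_add] using this.mul_right (‖Q‖ ^ N)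
    · intro n
      have h1 : ‖-(x * Q ^ (n + N))‖ ≤ 1/2 := by
        rw [norm_neg]; exact key (n + N) (Nat.le_add_left N n)
      have := Complex.norm_log_one_add_half_le_self h1
      rw [norm_neg, norm_mul, norm_pow] at this
      have h2 : (1 : ℂ) + -(x * Q ^ (n + N)) = 1 - x * Q ^ (n + N) := by ring
      rw [h2] at this
      exact this
  exact Complex.multipliable_of_summable_log hlog

set_option maxHeartbeats 800000 in
lemma qp_rec (Q x : ℂ) (hQ : ‖Q‖ < 1) : qp Q x = (1 - x) * qp Q (x * Q) := by
  unfold qp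
  have hm : Multipliable (fun n : ℕ => 1 - x * Q ^ (n + 1)) :=
    (multipliable_qp Q (x * Q) hQ).congr (fun n => by ring)
  rw [tprod_eq_zero_mul' hm]
  congr 1
  · simp
  · exact tprod_congr fun n => by ring

theorem stmt14 (q ν : ℝ) (hq0 : 0 < q) (hq1 : q < 1) (z : ℂ)
    (hden : qp ((q : ℂ) ^ 2) (-(z ^ 2)) ≠ 0)
    (hden' : qp ((q : ℂ) ^ 2) (-(((q : ℂ) * z) ^ 2)) ≠ 0) :
    z ^ 2 * ((q : ℂ) * gg q ν z - ((q ^ (2 * ν + 2) : ℝ) : ℂ) * gg q ν ((q : ℂ) * z)) =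
      -(q : ℂ) * gg q ν z + gg q ν ((q : ℂ) * z) := by
  set Q : ℂ := (q : ℂ) ^ 2 with hQdef
  set A : ℂ := ((q ^ (2 * ν + 2) : ℝ) : ℂ) with hAdef
  have hQ : ‖Q‖ < 1 := by
    rw [hQdef]
    rw [norm_pow, Complex.norm_real]
    have : |q| = q := abs_of_pos hq0
    rw [Real.norm_eq_abs, this]
    nlinarith
  have h1 : qp Q (-(z ^ 2)) = (1 + z ^ 2) * qp Q (-(((q : ℂ) * z) ^ 2)) := by
    have := qp_rec Q (-(z ^ 2)) hQ
    rw [this]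
    congr 1
    · ring
    · congr 1
      rw [hQdef]; ring
  have h2 : qp Q (-(A * z ^ 2)) = (1 + A * z ^ 2) * qp Q (-(A * ((q : ℂ) * z) ^ 2)) := by
    have := qp_rec Q (-(A * z ^ 2)) hQ
    rw [this]
    congr 1
    · ring
    · congr 1
      rw [hQdef]; ring
  have hz2 : (1 + z ^ 2) ≠ 0 := by
    intro h
    rw [h1, h, zero_mul] at hden
    exact hden rfl
  unfold gg
  rw [← hQdef, ← hAdef, h1, h2]
  field_simp
  ring
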